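/- For any four points P_i = (x_i, y_i) ∈ ℝ² and all (x̂,ŷ) ∈ ℝ², the scalar curl of the vector field −((x₁+x₄)y₁₄/2)·φ̂_{0,0} + ((x₂+x₁)y₂₁/2)·φ̂_{1,0} + ((x₃+x₂)y₃₂/2)·φ̂_{1,1} − ((x₄+x₃)y₄₃/2)·φ̂_{0,1} + (ψ̂_{0,0} + ψ̂_{0,1} + ψ̂_{1,0} + ψ̂_{1,1}) equals J(x̂,ŷ), the Jacobian determinant of the bilinear map; i.e., under the contravariant transform this field has physical curl identically equal to 1. -/

import Mathlib

/-- Entry `B₁₁` of the Jacobian matrix of the bilinear map: `(x₂₁(1−ŷ) + x₃₄(1+ŷ))/4`. -/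
noncomputable def B11 (x1 x2 x3 x4 yh : ℝ) : ℝ :=
  ((x2 - x1) * (1 - yh) + (x3 - x4) * (1 + yh)) / 4

/-- Entry `B₁₂`: `(x₄₁(1−x̂) + x₃₂(1+x̂))/4`. -/
noncomputable def B12 (x1 x2 x3 x4 xh : ℝ) : ℝ :=
  ((x4 - x1) * (1 - xh) + (x3 - x2) * (1 + xh)) / 4

/-- Entry `B₂₁`: `(y₂₁(1−ŷ) + y₃₄(1+ŷ))/4`. -/
noncomputable def B21 (y1 y2 y3 y4 yh : ℝ) : ℝ :=
  ((y2 - y1) * (1 - yh) + (y3 - y4) * (1 + yh)) / 4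

/-- Entry `B₂₂`: `(y₄₁(1−x̂) + y₃₂(1+x̂))/4`. -/
noncomputable def B22 (y1 y2 y3 y4 xh : ℝ) : ℝ :=
  ((y4 - y1) * (1 - xh) + (y3 - y2) * (1 + xh)) / 4

/-- The Jacobian determinant `J(x̂,ŷ) = det B(x̂,ŷ)` of the bilinear map. -/
noncomputable def Jdet (x1 x2 x3 x4 y1 y2 y3 y4 xh yh : ℝ) : ℝ :=
  B11 x1 x2 x3 x4 yh * B22 y1 y2 y3 y4 xh - B12 x1 x2 x3 x4 xh * B21 y1 y2 y3 y4 yh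

/-- Scalar curl of a planar vector field: `∇×u = ∂u₂/∂x̂ − ∂u₁/∂ŷ`. -/
noncomputable def scurl (u : ℝ × ℝ → ℝ × ℝ) (z : ℝ × ℝ) : ℝ :=
  deriv (fun t => (u (t, z.2)).2) z.1 - deriv (fun t => (u (z.1, t)).1) z.2

/-- Lowest-order function edge mode `φ̂_{0,0}`. -/
noncomputable def phi00 (z : ℝ × ℝ) : ℝ × ℝ :=
  (z.2 * (z.2 ^ 2 - 1) * (3 * z.1 ^ 2 - 5) / 32,
   -(z.1 * (z.1 ^ 2 - 1) * (3 * z.2 ^ 2 - 5)) / 32 - (z.1 - 1) / 4)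

/-- Lowest-order function edge mode `φ̂_{1,0}`. -/
noncomputable def phi10 (z : ℝ × ℝ) : ℝ × ℝ :=
  (-(z.2 * (z.2 ^ 2 - 1) * (3 * z.1 ^ 2 - 5)) / 32 - (z.2 - 1) / 4,
   z.1 * (z.1 ^ 2 - 1) * (3 * z.2 ^ 2 - 5) / 32)

/-- Lowest-order function edge mode `φ̂_{1,1}`. -/
noncomputable def phi11 (z : ℝ × ℝ) : ℝ × ℝ :=
  (-(z.2 * (z.2 ^ 2 - 1) * (3 * z.1 ^ 2 - 5)) / 32,
   z.1 * (z.1 ^ 2 - 1) * (3 * z.2 ^ 2 - 5) / 32 + (1 + z.1) / 4)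

/-- Lowest-order function edge mode `φ̂_{0,1}`. -/
noncomputable def phi01 (z : ℝ × ℝ) : ℝ × ℝ :=
  (z.2 * (z.2 ^ 2 - 1) * (3 * z.1 ^ 2 - 5) / 32 + (1 + z.2) / 4,
   -(z.1 * (z.1 ^ 2 - 1) * (3 * z.2 ^ 2 - 5)) / 32)

/-- Vertex mode `ψ̂_{0,0}` (corresponding to vertex `P₁`). -/
noncomputable def psi00 (x1 x2 x3 x4 y1 y2 y3 y4 : ℝ) (z : ℝ × ℝ) : ℝ × ℝ :=
  let c1 := (x2 - x1) * (y4 - y1) - (y2 - y1) * (x4 - x1)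
  let c2 := (x3 - x2) * (y1 - y2) - (y3 - y2) * (x1 - x2)
  let c4 := (x1 - x4) * (y3 - y4) - (y1 - y4) * (x3 - x4)
  ((z.2 - 1) ^ 2 * (1 + z.2) * (z.1 - 1) * ((c1 + 2 * c2) * z.1 + 3 * c1 + 2 * c2) / 128,
   -((1 + z.1) * (z.2 - 1) * (z.1 - 1) ^ 2 * ((c1 + 2 * c4) * z.2 + 3 * c1 + 2 * c4)) / 128)

/-- Vertex mode `ψ̂_{0,1}` (corresponding to vertex `P₂`). -/
noncomputable def psi01 (x1 x2 x3 x4 y1 y2 y3 y4 : ℝ) (z : ℝ × ℝ) : ℝ × ℝ :=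
  let c1 := (x2 - x1) * (y4 - y1) - (y2 - y1) * (x4 - x1)
  let c2 := (x3 - x2) * (y1 - y2) - (y3 - y2) * (x1 - x2)
  let c3 := (x4 - x3) * (y2 - y3) - (y4 - y3) * (x2 - x3)
  ((z.2 - 1) ^ 2 * (1 + z.2) * (z.1 + 1) * ((2 * c1 + c2) * z.1 - (2 * c1 + 3 * c2)) / 128,
   (1 - z.1) * (z.2 - 1) * (1 + z.1) ^ 2 * ((c2 + 2 * c3) * z.2 + 3 * c2 + 2 * c3) / 128)

/-- Vertex mode `ψ̂_{1,1}` (corresponding to vertex `P₃`). -/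
noncomputable def psi11 (x1 x2 x3 x4 y1 y2 y3 y4 : ℝ) (z : ℝ × ℝ) : ℝ × ℝ :=
  let c2 := (x3 - x2) * (y1 - y2) - (y3 - y2) * (x1 - x2)
  let c3 := (x4 - x3) * (y2 - y3) - (y4 - y3) * (x2 - x3)
  let c4 := (x1 - x4) * (y3 - y4) - (y1 - y4) * (x3 - x4)
  ((z.2 + 1) ^ 2 * (1 - z.2) * (z.1 + 1) * (-(2 * c4 + c3) * z.1 + 2 * c4 + 3 * c3) / 128,
   (1 - z.1) * (z.2 + 1) * (z.1 + 1) ^ 2 * ((2 * c2 + c3) * z.2 - (2 * c2 + 3 * c3)) / 128)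

/-- Vertex mode `ψ̂_{1,0}` (corresponding to vertex `P₄`). -/
noncomputable def psi10 (x1 x2 x3 x4 y1 y2 y3 y4 : ℝ) (z : ℝ × ℝ) : ℝ × ℝ :=
  let c1 := (x2 - x1) * (y4 - y1) - (y2 - y1) * (x4 - x1)
  let c3 := (x4 - x3) * (y2 - y3) - (y4 - y3) * (x2 - x3)
  let c4 := (x1 - x4) * (y3 - y4) - (y1 - y4) * (x3 - x4)
  ((z.2 + 1) ^ 2 * (1 - z.2) * (z.1 - 1) * (-(c4 + 2 * c3) * z.1 - (3 * c4 + 2 * c3)) / 128,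
   (1 + z.1) * (z.2 + 1) * (z.1 - 1) ^ 2 * (-(2 * c1 + c4) * z.2 + 2 * c1 + 3 * c4) / 128)

theorem deriv_cubic_eq (a b c d x : ℝ) (f : ℝ → ℝ)
    (hf : ∀ t, f t = a * t ^ 3 + b * t ^ 2 + c * t + d) :
    deriv f x = 3 * a * x ^ 2 + 2 * b * x + c := by
  have hfe : f = fun t => a * t ^ 3 + b * t ^ 2 + c * t + d := funext hf
  rw [hfe]
  have h1 := (hasDerivAt_pow 3 x).const_mul a
  have h2 := (hasDerivAt_pow 2 x).const_mul b
  have h3 := (hasDerivAt_id x).const_mul c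
  have h4 := (h1.add h2).add (h3.add_const d)
  have hfun : (fun x : ℝ => a * x ^ 3 + b * x ^ 2 + (c * id x + d))
      = fun t : ℝ => a * t ^ 3 + b * t ^ 2 + c * t + d := by
    funext t; simp only [id_eq]; ring
  replace h4 : HasDerivAt (fun x : ℝ => a * x ^ 3 + b * x ^ 2 + (c * id x + d)) _ x := h4
  rw [hfun] at h4
  have hval : a * ((3 : ℕ) * x ^ (3 - 1)) + b * ((2 : ℕ) * x ^ (2 - 1)) + c * 1
      = 3 * a * x ^ 2 + 2 * b * x + c := by push_cast; ring
  rw [hval] at h4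
  have h5 : HasDerivAt (fun t : ℝ => a * t ^ 3 + b * t ^ 2 + c * t + d)
      (3 * a * x ^ 2 + 2 * b * x + c) x := h4
  exact h5.deriv

/-- The scalar curl of the combination
`−((x₁+x₄)y₁₄/2)φ̂₀₀ + ((x₂+x₁)y₂₁/2)φ̂₁₀ + ((x₃+x₂)y₃₂/2)φ̂₁₁ − ((x₄+x₃)y₄₃/2)φ̂₀₁
 + (ψ̂₀₀ + ψ̂₀₁ + ψ̂₁₀ + ψ̂₁₁)` equals the Jacobian determinant `J(x̂,ŷ)`; under the
contravariant transform this field has physical curl identically 1. -/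
theorem curl_of_combination_eq_jacobian (x1 x2 x3 x4 y1 y2 y3 y4 : ℝ) (z : ℝ × ℝ) :
    scurl (fun w =>
      (-((x1 + x4) * (y1 - y4) / 2)) • phi00 w + ((x2 + x1) * (y2 - y1) / 2) • phi10 w +
        ((x3 + x2) * (y3 - y2) / 2) • phi11 w + (-((x4 + x3) * (y4 - y3) / 2)) • phi01 w +
        (psi00 x1 x2 x3 x4 y1 y2 y3 y4 w + psi01 x1 x2 x3 x4 y1 y2 y3 y4 w +
          psi10 x1 x2 x3 x4 y1 y2 y3 y4 w + psi11 x1 x2 x3 x4 y1 y2 y3 y4 w)) z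
    = Jdet x1 x2 x3 x4 y1 y2 y3 y4 z.1 z.2 := by
  obtain ⟨xh, yh⟩ := z
  simp only [scurl]
  have h1 : ∀ t : ℝ, (((-((x1 + x4) * (y1 - y4) / 2)) • phi00 (t, yh) + ((x2 + x1) * (y2 - y1) / 2) • phi10 (t, yh) + ((x3 + x2) * (y3 - y2) / 2) • phi11 (t, yh) + (-((x4 + x3) * (y4 - y3) / 2)) • phi01 (t, yh) + (psi00 x1 x2 x3 x4 y1 y2 y3 y4 (t, yh) + psi01 x1 x2 x3 x4 y1 y2 y3 y4 (t, yh) + psi10 x1 x2 x3 x4 y1 y2 y3 y4 (t, yh) + psi11 x1 x2 x3 x4 y1 y2 y3 y4 (t, yh)))).2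
      = ((-1)/32*x4*y3*yh + 1/32*x4*y2*yh + 1/32*x3*y4*yh + (-1)/32*x3*y1*yh + (-1)/32*x2*y4*yh + 1/32*x2*y1*yh + 1/32*x1*y3*yh + (-1)/32*x1*y2*yh) * t ^ 3 + (5/64*x4*y2 + (-3)/64*x4*y2*yh^2 + (-5)/64*x4*y1 + 3/64*x4*y1*yh^2 + (-5)/64*x3*y2 + 3/64*x3*y2*yh^2 + 5/64*x3*y1 + (-3)/64*x3*y1*yh^2 + (-5)/64*x2*y4 + 3/64*x2*y4*yh^2 + 5/64*x2*y3 + (-3)/64*x2*y3*yh^2 + 5/64*x1*y4 + (-3)/64*x1*y4*yh^2 + (-5)/64*x1*y3 + 3/64*x1*y3*yh^2) * t ^ 2 + ((-1)/8*x4*y4 + 1/32*x4*y3*yh + (-1)/32*x4*y2*yh + 1/8*x4*y1 + (-1)/32*x3*y4*yh + 1/8*x3*y3 + (-1)/8*x3*y2 + 1/32*x3*y1*yh + 1/32*x2*y4*yh + 1/8*x2*y3 + (-1)/8*x2*y2 + (-1)/32*x2*y1*yh + (-1)/8*x1*y4 + (-1)/32*x1*y3*yh + 1/32*x1*y2*yh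 + 1/8*x1*y1) * t + (1/8*x4*y4 + (-5)/64*x4*y2 + 3/64*x4*y2*yh^2 + (-3)/64*x4*y1 + (-3)/64*x4*y1*yh^2 + 1/8*x3*y3 + (-3)/64*x3*y2 + (-3)/64*x3*y2*yh^2 + (-5)/64*x3*y1 + 3/64*x3*y1*yh^2 + 5/64*x2*y4 + (-3)/64*x2*y4*yh^2 + 3/64*x2*y3 + 3/64*x2*y3*yh^2 + (-1)/8*x2*y2 + 3/64*x1*y4 + 3/64*x1*y4*yh^2 + 5/64*x1*y3 + (-3)/64*x1*y3*yh^2 + (-1)/8*x1*y1) := by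
    intro t
    simp only [phi00, phi10, phi11, phi01, psi00, psi01, psi10, psi11, Prod.smul_mk,
      Prod.mk_add_mk, smul_eq_mul]
    ring
  have h2 : ∀ t : ℝ, (((-((x1 + x4) * (y1 - y4) / 2)) • phi00 (xh, t) + ((x2 + x1) * (y2 - y1) / 2) • phi10 (xh, t) + ((x3 + x2) * (y3 - y2) / 2) • phi11 (xh, t) + (-((x4 + x3) * (y4 - y3) / 2)) • phi01 (xh, t) + (psi00 x1 x2 x3 x4 y1 y2 y3 y4 (xh, t) + psi01 x1 x2 x3 x4 y1 y2 y3 y4 (xh, t) + psi10 x1 x2 x3 x4 y1 y2 y3 y4 (xh, t) + psi11 x1 x2 x3 x4 y1 y2 y3 y4 (xh, t)))).1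
      = ((-1)/32*x4*y2*xh + 1/32*x4*y1*xh + 1/32*x3*y2*xh + (-1)/32*x3*y1*xh + 1/32*x2*y4*xh + (-1)/32*x2*y3*xh + (-1)/32*x1*y4*xh + 1/32*x1*y3*xh) * t ^ 3 + (5/64*x4*y3 + (-3)/64*x4*y3*xh^2 + (-5)/64*x4*y2 + 3/64*x4*y2*xh^2 + (-5)/64*x3*y4 + 3/64*x3*y4*xh^2 + 5/64*x3*y1 + (-3)/64*x3*y1*xh^2 + 5/64*x2*y4 + (-3)/64*x2*y4*xh^2 + (-5)/64*x2*y1 + 3/64*x2*y1*xh^2 + (-5)/64*x1*y3 + 3/64*x1*y3*xh^2 + 5/64*x1*y2 + (-3)/64*x1*y2*xh^2) * t ^ 2 + ((-1)/8*x4*y4 + 1/8*x4*y3 + 1/32*x4*y2*xh + (-1)/32*x4*y1*xh + (-1)/8*x3*y4 + 1/8*x3*y3 + (-1)/32*x3*y2*xh + 1/32*x3*y1*xh + (-1)/32*x2*y4*xh + 1/32*x2*y3*xh + (-1)/8*x2*y2 + 1/8*x2*y1 + 1/32*x1*y4*xh + (-1)/32*x1*y3*xh + (-1)/8*x1*y2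 + 1/8*x1*y1) * t + ((-1)/8*x4*y4 + 3/64*x4*y3 + 3/64*x4*y3*xh^2 + 5/64*x4*y2 + (-3)/64*x4*y2*xh^2 + (-3)/64*x3*y4 + (-3)/64*x3*y4*xh^2 + 1/8*x3*y3 + (-5)/64*x3*y1 + 3/64*x3*y1*xh^2 + (-5)/64*x2*y4 + 3/64*x2*y4*xh^2 + 1/8*x2*y2 + (-3)/64*x2*y1 + (-3)/64*x2*y1*xh^2 + 5/64*x1*y3 + (-3)/64*x1*y3*xh^2 + 3/64*x1*y2 + 3/64*x1*y2*xh^2 + (-1)/8*x1*y1) := by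
    intro t
    simp only [phi00, phi10, phi11, phi01, psi00, psi01, psi10, psi11, Prod.smul_mk,
      Prod.mk_add_mk, smul_eq_mul]
    ring
  rw [deriv_cubic_eq _ _ _ _ xh _ h1, deriv_cubic_eq _ _ _ _ yh _ h2]
  simp only [Jdet, B11, B12, B21, B22]
  ring
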